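/- For every real number β with β < −1/2, the polynomial q_β has three distinct real roots, two of them smaller than −1/2 and one larger than 1/2: there exist real numbers λ₁ < λ₂ < −1/2 and λ₃ > 1/2 with q_β(λ₁) = q_β(λ₂) = q_β(λ₃) = 0. -/
import Mathlib


theorem q_beta_three_roots_neg (β : ℝ) (hβ : β < -(1/2)) :
    ∃ l₁ l₂ l₃ : ℝ, l₁ < l₂ ∧ l₂ < -(1/2) ∧ 1/2 < l₃ ∧
      l₁^3 - 3 * β * l₁^2 + β = 0 ∧
      l₂^3 - 3 * β * l₂^2 + β = 0 ∧
      l₃^3 - 3 * β * l₃^2 + β = 0 := by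
  set f : ℝ → ℝ := fun x => x^3 - 3 * β * x^2 + β with hf
  have hcont : Continuous f := by fun_prop
  have hβ0 : β < 0 := by linarith
  -- sign facts
  have h4β : f (4*β) < 0 := by
    simp only [hf]; nlinarith [sq_nonneg β, mul_pos (mul_pos (neg_pos.2 hβ0) (neg_pos.2 hβ0)) (neg_pos.2 hβ0)]
  have h2β : 0 < f (2*β) := by
    simp only [hf]; nlinarith [sq_nonneg (2*β+1), sq_nonneg (2*β-1)]
  have hhalfneg : f (-(1/2)) < 0 := by
    simp only [hf]; nlinarith
  have hhalfpos : f (1/2) < 0 := by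
    simp only [hf]; nlinarith
  have hbig : 0 < f (1 - 6*β) := by
    simp only [hf]
    nlinarith [sq_nonneg β, mul_pos (mul_pos (neg_pos.2 hβ0) (neg_pos.2 hβ0)) (neg_pos.2 hβ0), sq_nonneg (1-6*β)]
  -- IVT applications
  have ivt : ∀ a b : ℝ, a ≤ b → f a < 0 → 0 < f b → ∃ x ∈ Set.Ioo a b, f x = 0 := by
    intro a b hab ha hb
    have := intermediate_value_Ioo hab hcont.continuousOn
    have h0 : (0:ℝ) ∈ Set.Ioo (f a) (f b) := ⟨ha, hb⟩
    obtain ⟨x, hx, hfx⟩ := this h0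
    exact ⟨x, hx, hfx⟩
  have ivt' : ∀ a b : ℝ, a ≤ b → 0 < f a → f b < 0 → ∃ x ∈ Set.Ioo a b, f x = 0 := by
    intro a b hab ha hb
    have := intermediate_value_Ioo' hab hcont.continuousOn
    have h0 : (0:ℝ) ∈ Set.Ioo (f b) (f a) := ⟨hb, ha⟩
    obtain ⟨x, hx, hfx⟩ := this h0
    exact ⟨x, hx, hfx⟩
  obtain ⟨l₁, hl₁m, hl₁⟩ := ivt (4*β) (2*β) (by linarith) h4β h2β
  obtain ⟨l₂, hl₂m, hl₂⟩ := ivt' (2*β) (-(1/2)) (by linarith) h2β hhalfneg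
  obtain ⟨l₃, hl₃m, hl₃⟩ := ivt (1/2) (1-6*β) (by linarith) hhalfpos hbig
  exact ⟨l₁, l₂, l₃, lt_trans hl₁m.2 hl₂m.1, hl₂m.2, hl₃m.1, hl₁, hl₂, hl₃⟩
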